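/- Let X be a locally compact regular topological space and f : X → X a continuous map. If x ∉ closure(Λ(X)), where Λ(X) = ⋃_{y ∈ X} Λ(y), then there exists an open neighborhood V of x such that X \ closure(V) is a right-absorbing open subset of X. -/
import Mathlib


open Set Topology

/-- The omega-limit set of a point `x` under the discrete semi-flow generated by `f`:
`Λ(x) = ⋂ₙ closure {f^[m] x : m ≥ n}`. -/
def Lambda {X : Type*} [TopologicalSpace X] (f : X → X) (x : X) : Set X :=
  ⋂ n : ℕ, closure ((fun m => f^[m] x) '' Set.Ici n)

/-- The omega-limit set of a subset `S`: `Λ(S) = ⋃_{x ∈ S} Λ(x)`. -/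
def LambdaSet {X : Type*} [TopologicalSpace X] (f : X → X) (S : Set X) : Set X :=
  ⋃ x ∈ S, Lambda f x

/-- The region of pseudo-attraction of `S`: `PA(S) = {x : Λ(x) ⊆ S}`. -/
def PA {X : Type*} [TopologicalSpace X] (f : X → X) (S : Set X) : Set X :=
  {x | Lambda f x ⊆ S}

/-- The region of weak-attraction of `S`: `WA(S) = {x : Λ(x) ∩ S ≠ ∅}`. -/
def WA {X : Type*} [TopologicalSpace X] (f : X → X) (S : Set X) : Set X :=
  {x | (Lambda f x ∩ S).Nonempty}

/-- The region of attraction of `S`: `A(S) = {x : ∅ ≠ Λ(x) ⊆ S}`. -/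
def RA {X : Type*} [TopologicalSpace X] (f : X → X) (S : Set X) : Set X :=
  {x | (Lambda f x).Nonempty ∧ Lambda f x ⊆ S}

/-- `X` is (positively) Lagrange stable at `x` if the closure of the trajectory of `x`
is compact. -/
def LagrangeStableAt {X : Type*} [TopologicalSpace X] (f : X → X) (x : X) : Prop :=
  IsCompact (closure (Set.range fun n : ℕ => f^[n] x))

/-- An externology on a topological space: a nonempty family of open sets closed under
finite intersections such that any open set containing a member belongs to the family. -/
def IsExternology {X : Type*} [TopologicalSpace X] (ε : Set (Set X)) : Prop :=
  ε.Nonempty ∧ (∀ E ∈ ε, IsOpen E) ∧ (∀ E ∈ ε, ∀ F ∈ ε, E ∩ F ∈ ε) ∧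
    (∀ E ∈ ε, ∀ U : Set X, IsOpen U → E ⊆ U → U ∈ ε)

/-- The limit space of an externology: `L(X) = ⋂_{E ∈ ε} E`. -/
def limitSpace {X : Type*} (ε : Set (Set X)) : Set X := ⋂ E ∈ ε, E

/-- The bar-limit space of an externology: `L̄(X) = ⋂_{E ∈ ε} closure E`. -/
def barLimit {X : Type*} [TopologicalSpace X] (ε : Set (Set X)) : Set X :=
  ⋂ E ∈ ε, closure E

/-- The region of pseudo-attraction of the externology:
`D(X) = {x : ∀ E ∈ ε, f^[m] x ∈ E for all large m}`. -/
def Dregion {X : Type*} (f : X → X) (ε : Set (Set X)) : Set X :=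
  {x | ∀ E ∈ ε, ∃ n : ℕ, ∀ m ≥ n, f^[m] x ∈ E}

/-- The region of pseudo-bar-attraction of the externology:
`D̄(X) = {x : ∀ E ∈ ε, f^[m] x ∈ closure E for all large m}`. -/
def Dbar {X : Type*} [TopologicalSpace X] (f : X → X) (ε : Set (Set X)) : Set X :=
  {x | ∀ E ∈ ε, ∃ n : ℕ, ∀ m ≥ n, f^[m] x ∈ closure E}

/-- A right-absorbing open subset: an open set that eventually contains the trajectory
of every point. -/
def RightAbsorbing {X : Type*} [TopologicalSpace X] (f : X → X) (E : Set X) : Prop :=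
  IsOpen E ∧ ∀ y : X, ∃ n : ℕ, ∀ m ≥ n, f^[m] y ∈ E

/-- A point `x` is periodic if `f^[n] x = x` for some `n ≥ 1`. -/
def IsPeriodicPoint {X : Type*} (f : X → X) (x : X) : Prop := ∃ n ≥ 1, f^[n] x = x

theorem stmt18 {X : Type*} [TopologicalSpace X] [LocallyCompactSpace X] [RegularSpace X]
    (f : X → X) (hf : Continuous f) (x : X)
    (hx : x ∉ closure (LambdaSet f (Set.univ : Set X))) :
    ∃ V : Set X, IsOpen V ∧ x ∈ V ∧ RightAbsorbing f ((closure V)ᶜ) := by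
  set U : Set X := (closure (LambdaSet f (Set.univ : Set X)))ᶜ with hU_def
  have hU_open : IsOpen U := isClosed_closure.isOpen_compl
  have hxU : x ∈ U := hx
  obtain ⟨s, hs_mem, hs_sub, hs_comp⟩ := local_compact_nhds (hU_open.mem_nhds hxU)
  obtain ⟨t, ht_mem, ht_closed, ht_sub⟩ := exists_mem_nhds_isClosed_subset hs_mem
  have ht_comp : IsCompact t := hs_comp.of_isClosed_subset ht_closed ht_sub
  refine ⟨interior t, isOpen_interior, mem_interior_iff_mem_nhds.2 ht_mem, ?_, ?_⟩
  · exact isClosed_closure.isOpen_compl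
  · intro y
    by_contra h
    push_neg at h
    have hfreq : ∃ᶠ m in Filter.atTop, f^[m] y ∈ t := by
      rw [Filter.frequently_atTop]
      intro n
      obtain ⟨m, hm, hm2⟩ := h n
      exact ⟨m, hm, closure_minimal interior_subset ht_closed (not_not.mp hm2)⟩
    set u : ℕ → X := fun m => f^[m] y with hu_def
    haveI hF : (Filter.map u Filter.atTop ⊓ Filter.principal t).NeBot := by
      rw [← Filter.frequently_mem_iff_neBot]
      exact hfreq
    obtain ⟨z, hzt, hz⟩ :=
      ht_comp (f := Filter.map u Filter.atTop ⊓ Filter.principal t) inf_le_right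
    have hzΛ : z ∈ Lambda f y := by
      rw [Lambda, Set.mem_iInter]
      intro n
      rw [mem_closure_iff_clusterPt]
      refine hz.mono (le_trans inf_le_left ?_)
      rw [Filter.le_principal_iff, Filter.mem_map]
      exact Filter.mem_of_superset (Filter.Ici_mem_atTop n) (fun m hm => Set.mem_image_of_mem u hm)
    have hzL : z ∈ LambdaSet f (Set.univ : Set X) := by
      exact Set.mem_biUnion (Set.mem_univ y) hzΛ
    have : z ∈ U := hs_sub (ht_sub hzt)
    exact this (subset_closure hzL)
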